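/- For every μ > 0 and all i, j ∈ {0,1,2}, ∫_{ℝ²} e^{Ū_μ(y)} Z_i(y) Z_j(y) dy = (8π/3) δ_{ij}, where δ_{ij} is the Kronecker delta. -/

import Mathlib

open Real MeasureTheory

/-- `Ū_μ(y) = log(8μ²/(μ² + |y|²)²)`. -/
noncomputable def Ubar (μ : ℝ) (y : EuclideanSpace ℝ (Fin 2)) : ℝ :=
  Real.log (8 * μ ^ 2 / (μ ^ 2 + ‖y‖ ^ 2) ^ 2)

/-- The three elements `Z₀, Z₁, Z₂` of the kernel of the linearized Liouville operator. -/
noncomputable def Zker (μ : ℝ) : Fin 3 → EuclideanSpace ℝ (Fin 2) → ℝ :=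
  ![fun y => (μ ^ 2 - ‖y‖ ^ 2) / (μ ^ 2 + ‖y‖ ^ 2),
    fun y => 2 * μ * y 0 / (μ ^ 2 + ‖y‖ ^ 2),
    fun y => 2 * μ * y 1 / (μ ^ 2 + ‖y‖ ^ 2)]

section Aux

local notation "E2" => EuclideanSpace ℝ (Fin 2)

variable {μ : ℝ}

lemma denom_pos (hμ : 0 < μ) (y : E2) : 0 < μ ^ 2 + ‖y‖ ^ 2 := by positivity

lemma exp_Ubar (hμ : 0 < μ) (y : E2) :
    Real.exp (Ubar μ y) = 8 * μ ^ 2 / (μ ^ 2 + ‖y‖ ^ 2) ^ 2 := by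
  have h := denom_pos hμ y
  exact Real.exp_log (by positivity)

lemma norm_sq_eq (y : E2) : ‖y‖ ^ 2 = y 0 ^ 2 + y 1 ^ 2 := by
  rw [EuclideanSpace.norm_eq, Real.sq_sqrt (Finset.sum_nonneg fun i _ => sq_nonneg _)]
  simp [Fin.sum_univ_two, sq_abs]

lemma abs_Zker_le_one (hμ : 0 < μ) (i : Fin 3) (y : E2) : |Zker μ i y| ≤ 1 := by
  have h := denom_pos hμ y
  have hy0 : y 0 ^ 2 ≤ ‖y‖ ^ 2 := by rw [norm_sq_eq]; nlinarith [sq_nonneg (y 1)]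
  have hy1 : y 1 ^ 2 ≤ ‖y‖ ^ 2 := by rw [norm_sq_eq]; nlinarith [sq_nonneg (y 0)]
  have hn : (0:ℝ) ≤ ‖y‖ ^ 2 := sq_nonneg _
  fin_cases i <;> simp [Zker] <;>
    rw [abs_div, abs_of_pos h, div_le_one h] <;>
    rw [abs_le] <;> constructor
  · nlinarith
  · nlinarith
  · nlinarith [sq_nonneg (μ + y 0)]
  · nlinarith [sq_nonneg (μ - y 0)]
  · nlinarith [sq_nonneg (μ + y 1)]
  · nlinarith [sq_nonneg (μ - y 1)]

lemma continuous_expUbar (hμ : 0 < μ) : Continuous fun y : E2 => Real.exp (Ubar μ y) := by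
  have hrw : (fun y : E2 => Real.exp (Ubar μ y))
      = fun y => 8 * μ ^ 2 / (μ ^ 2 + ‖y‖ ^ 2) ^ 2 := funext (exp_Ubar hμ)
  rw [hrw]
  exact continuous_const.div (by continuity) fun y => by
    have := denom_pos hμ y; positivity

lemma continuous_coord (i : Fin 2) : Continuous fun y : E2 => y i :=
  (EuclideanSpace.proj (𝕜 := ℝ) i).continuous

lemma continuous_Zker (hμ : 0 < μ) (i : Fin 3) : Continuous (Zker μ i) := by
  have hd : ∀ y : E2, (μ ^ 2 + ‖y‖ ^ 2) ≠ 0 := fun y => (denom_pos hμ y).ne'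
  fin_cases i <;> simp only [Zker, Matrix.cons_val_zero, Matrix.cons_val_one,
    Matrix.head_cons, Matrix.cons_val_two, Matrix.tail_cons, Fin.mk_one, Fin.isValue,
    show (⟨0, by norm_num⟩ : Fin 3) = 0 from rfl, show (⟨2, by norm_num⟩ : Fin 3) = 2 from rfl]
  · exact Continuous.div (by continuity) (by continuity) hd
  · exact Continuous.div (continuous_const.mul (continuous_coord 0)) (by continuity) hd
  · exact Continuous.div (continuous_const.mul (continuous_coord 1)) (by continuity) hd

lemma integrable_expUbar (hμ : 0 < μ) : Integrable fun y : E2 => Real.exp (Ubar μ y) := by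
  set c : ℝ := min 1 (μ ^ 2) with hc
  have hc0 : 0 < c := lt_min one_pos (by positivity)
  have hc1 : c ≤ 1 := min_le_left _ _
  have hc2 : c ≤ μ ^ 2 := min_le_right _ _
  have h4 : ((Module.finrank ℝ E2 : ℝ)) < 4 := by
    rw [finrank_euclideanSpace_fin]; norm_num
  refine ((integrable_one_add_norm (E := E2) h4).const_mul (32 * μ ^ 2 / c ^ 2)).mono'
    ((continuous_expUbar hμ).aestronglyMeasurable) (Filter.Eventually.of_forall fun y => ?_)
  have hr : (0:ℝ) ≤ ‖y‖ := norm_nonneg y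
  have hd := denom_pos hμ y
  rw [Real.norm_eq_abs, Real.abs_exp, exp_Ubar hμ]
  have hpow : (1 + ‖y‖) ^ (-(4:ℝ)) = ((1 + ‖y‖) ^ (4:ℕ))⁻¹ := by
    rw [Real.rpow_neg (by positivity), ← Real.rpow_natCast]
    norm_num
  rw [hpow]
  have key : c * (1 + ‖y‖) ^ 2 ≤ 2 * (μ ^ 2 + ‖y‖ ^ 2) := by
    nlinarith [mul_nonneg hc0.le (sq_nonneg (1 - ‖y‖)), sq_nonneg ‖y‖]
  have key2 : (c * (1 + ‖y‖) ^ 2) ^ 2 ≤ (2 * (μ ^ 2 + ‖y‖ ^ 2)) ^ 2 := by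
    apply pow_le_pow_left₀ (by positivity) key
  have hR : 32 * μ ^ 2 / c ^ 2 * ((1 + ‖y‖) ^ (4:ℕ))⁻¹
      = 32 * μ ^ 2 / (c ^ 2 * (1 + ‖y‖) ^ (4:ℕ)) := by
    rw [div_eq_mul_inv, div_eq_mul_inv, mul_inv, mul_assoc]
  rw [hR, div_le_div_iff₀ (by positivity) (by positivity)]
  nlinarith [mul_le_mul_of_nonneg_left key2 (by positivity : (0:ℝ) ≤ 8 * μ ^ 2)]

lemma integrable_prod (hμ : 0 < μ) (i j : Fin 3) :
    Integrable fun y : E2 => Real.exp (Ubar μ y) * Zker μ i y * Zker μ j y := by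
  refine (integrable_expUbar hμ).mono'
    (((((continuous_expUbar hμ).mul (continuous_Zker hμ i)).mul
      (continuous_Zker hμ j))).aestronglyMeasurable)
    (Filter.Eventually.of_forall fun y => ?_)
  rw [Real.norm_eq_abs, abs_mul, abs_mul, Real.abs_exp]
  have h1 := abs_Zker_le_one hμ i y
  have h2 := abs_Zker_le_one hμ j y
  have h0 := (Real.exp_pos (Ubar μ y)).le
  calc rexp (Ubar μ y) * |Zker μ i y| * |Zker μ j y|
      ≤ rexp (Ubar μ y) * |Zker μ i y| * 1 := by
        apply mul_le_mul_of_nonneg_left h2 (by positivity)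
    _ = rexp (Ubar μ y) * |Zker μ i y| := mul_one _
    _ ≤ rexp (Ubar μ y) * 1 := mul_le_mul_of_nonneg_left h1 h0
    _ = rexp (Ubar μ y) := mul_one _

lemma Zker_sq_sum (hμ : 0 < μ) (y : E2) :
    Zker μ 0 y ^ 2 + Zker μ 1 y ^ 2 + Zker μ 2 y ^ 2 = 1 := by
  simp only [Zker, Matrix.cons_val_zero, Matrix.cons_val_one, Matrix.head_cons,
    Matrix.cons_val_two, Matrix.tail_cons, norm_sq_eq]
  have hne : μ ^ 2 + (y 0 ^ 2 + y 1 ^ 2) ≠ 0 := by positivity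
  field_simp
  ring

lemma integral_radial (f : ℝ → ℝ) :
    ∫ y : E2, f ‖y‖ = (2 * π) * ∫ r in Set.Ioi (0:ℝ), r * f r := by
  have h := MeasureTheory.integral_fun_norm_addHaar (volume : Measure E2) f
  rw [finrank_euclideanSpace_fin] at h
  norm_num [smul_eq_mul] at h
  have hball : (volume (Metric.ball (0:E2) 1)).toReal = π := by
    rw [EuclideanSpace.volume_ball]
    norm_num [Real.sq_sqrt pi_nonneg, Real.Gamma_two, ENNReal.toReal_ofReal pi_nonneg]
  rw [h, measureReal_def, hball]
  ring

lemma integral_one_dim_A (hμ : 0 < μ) :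
    ∫ r in Set.Ioi (0:ℝ), r * (8 * μ ^ 2 / (μ ^ 2 + r ^ 2) ^ 2) = 4 := by
  have htop : Filter.Tendsto (fun r : ℝ => μ ^ 2 + r ^ 2) Filter.atTop Filter.atTop :=
    Filter.tendsto_atTop_add_const_left _ _ (Filter.tendsto_pow_atTop two_ne_zero)
  have key := integral_Ioi_of_hasDerivAt_of_nonneg'
    (g := fun r : ℝ => -(4 * μ ^ 2) * (μ ^ 2 + r ^ 2)⁻¹)
    (g' := fun r : ℝ => r * (8 * μ ^ 2 / (μ ^ 2 + r ^ 2) ^ 2)) (a := 0) (l := 0)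
    ?_ ?_ ?_
  · rw [key]
    have hμ2 : (μ:ℝ) ^ 2 ≠ 0 := by positivity
    field_simp
    ring
  · intro x _
    have hne : μ ^ 2 + x ^ 2 ≠ 0 := by positivity
    have h1 : HasDerivAt (fun r : ℝ => μ ^ 2 + r ^ 2) (2 * x ^ 1) x :=
      (hasDerivAt_pow 2 x).const_add (μ ^ 2)
    have h2 := (h1.inv hne).const_mul (-(4 * μ ^ 2))
    refine h2.congr_deriv ?_
    field_simp
    ring
  · intro x hx
    have hx0 : (0:ℝ) ≤ x := (le_of_lt hx)
    positivity
  · simpa using htop.inv_tendsto_atTop.const_mul (-(4 * μ ^ 2))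

lemma integral_one_dim_B (hμ : 0 < μ) :
    ∫ r in Set.Ioi (0:ℝ), r * (8 * μ ^ 2 * (μ ^ 2 - r ^ 2) ^ 2 / (μ ^ 2 + r ^ 2) ^ 4)
      = 4 / 3 := by
  have htop : Filter.Tendsto (fun r : ℝ => μ ^ 2 + r ^ 2) Filter.atTop Filter.atTop :=
    Filter.tendsto_atTop_add_const_left _ _ (Filter.tendsto_pow_atTop two_ne_zero)
  have key := integral_Ioi_of_hasDerivAt_of_nonneg'
    (g := fun r : ℝ => 4 * μ ^ 2 * (-(4 * μ ^ 4 / 3) * ((μ ^ 2 + r ^ 2)⁻¹) ^ 3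
      + 2 * μ ^ 2 * ((μ ^ 2 + r ^ 2)⁻¹) ^ 2 - (μ ^ 2 + r ^ 2)⁻¹))
    (g' := fun r : ℝ => r * (8 * μ ^ 2 * (μ ^ 2 - r ^ 2) ^ 2 / (μ ^ 2 + r ^ 2) ^ 4))
    (a := 0) (l := 0) ?_ ?_ ?_
  · rw [key]
    have hμ2 : (μ:ℝ) ^ 2 ≠ 0 := by positivity
    field_simp
    ring
  · intro x _
    have hne : μ ^ 2 + x ^ 2 ≠ 0 := by positivity
    have h1 : HasDerivAt (fun r : ℝ => μ ^ 2 + r ^ 2) (2 * x ^ 1) x :=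
      (hasDerivAt_pow 2 x).const_add (μ ^ 2)
    have hv := h1.inv hne
    have h2 := ((((hv.pow 3).const_mul (-(4 * μ ^ 4 / 3))).add
      ((hv.pow 2).const_mul (2 * μ ^ 2))).sub hv).const_mul (4 * μ ^ 2)
    refine h2.congr_deriv ?_
    norm_num only [Pi.inv_apply]
    field_simp
    ring
  · intro x hx
    have hx0 : (0:ℝ) ≤ x := le_of_lt hx
    positivity
  · have hinv := htop.inv_tendsto_atTop
    have hq : Filter.Tendsto
        (fun v : ℝ => 4 * μ ^ 2 * (-(4 * μ ^ 4 / 3) * v ^ 3 + 2 * μ ^ 2 * v ^ 2 - v))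
        (nhds 0) (nhds 0) := by
      have hcont : Continuous
          (fun v : ℝ => 4 * μ ^ 2 * (-(4 * μ ^ 4 / 3) * v ^ 3 + 2 * μ ^ 2 * v ^ 2 - v)) := by
        continuity
      simpa using hcont.tendsto 0
    exact hq.comp hinv

lemma integral_S (hμ : 0 < μ) : ∫ y : E2, Real.exp (Ubar μ y) = 8 * π := by
  have hrw : (fun y : E2 => Real.exp (Ubar μ y))
      = fun y => (fun r : ℝ => 8 * μ ^ 2 / (μ ^ 2 + r ^ 2) ^ 2) ‖y‖ := funext (exp_Ubar hμ)
  rw [hrw, integral_radial (fun r : ℝ => 8 * μ ^ 2 / (μ ^ 2 + r ^ 2) ^ 2),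
    integral_one_dim_A hμ]
  ring

lemma integral_D (hμ : 0 < μ) :
    ∫ y : E2, Real.exp (Ubar μ y) * Zker μ 0 y * Zker μ 0 y = 8 * π / 3 := by
  have hrw : (fun y : E2 => Real.exp (Ubar μ y) * Zker μ 0 y * Zker μ 0 y)
      = fun y => (fun r : ℝ => 8 * μ ^ 2 * (μ ^ 2 - r ^ 2) ^ 2 / (μ ^ 2 + r ^ 2) ^ 4) ‖y‖ := by
    funext y
    have h := (denom_pos hμ y).ne'
    rw [exp_Ubar hμ]
    simp only [Zker, Matrix.cons_val_zero]
    field_simp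
  rw [hrw, integral_radial (fun r : ℝ => 8 * μ ^ 2 * (μ ^ 2 - r ^ 2) ^ 2 / (μ ^ 2 + r ^ 2) ^ 4),
    integral_one_dim_B hμ]
  ring

lemma integral_comp_isometry (e : E2 ≃ₗᵢ[ℝ] E2) (F : E2 → ℝ) :
    ∫ y, F (e y) = ∫ y, F y :=
  e.measurePreserving.integral_comp e.toHomeomorph.measurableEmbedding F

lemma integral_eq_zero_of_comp_neg (e : E2 ≃ₗᵢ[ℝ] E2) (F : E2 → ℝ)
    (h : ∀ y, F (e y) = -F y) : ∫ y, F y = 0 := by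
  have h1 : ∫ y, F y = ∫ y, F (e y) := (integral_comp_isometry e F).symm
  have h2 : ∫ y, F (e y) = -∫ y, F y := by
    simp_rw [h]
    exact integral_neg F
  linarith

/-- swap of the two coordinates. -/
noncomputable def swapIso : E2 ≃ₗᵢ[ℝ] E2 :=
  LinearIsometryEquiv.piLpCongrLeft 2 ℝ ℝ (Equiv.swap 0 1)

lemma swapIso_apply_zero (y : E2) : swapIso y 0 = y 1 := by
  simp only [swapIso, LinearIsometryEquiv.piLpCongrLeft_apply, Equiv.piCongrLeft'_apply,
    Equiv.symm_swap]
  have h : (Equiv.swap (0:Fin 2) 1) 0 = 1 := by decide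
  rw [h]

lemma swapIso_apply_one (y : E2) : swapIso y 1 = y 0 := by
  simp only [swapIso, LinearIsometryEquiv.piLpCongrLeft_apply, Equiv.piCongrLeft'_apply,
    Equiv.symm_swap]
  have h : (Equiv.swap (0:Fin 2) 1) 1 = 0 := by decide
  rw [h]

/-- negation of the first coordinate. -/
noncomputable def negIso0 : E2 ≃ₗᵢ[ℝ] E2 :=
  LinearIsometryEquiv.piLpCongrRight 2 ![LinearIsometryEquiv.neg ℝ, LinearIsometryEquiv.refl ℝ ℝ]

lemma negIso0_apply_zero (y : E2) : negIso0 y 0 = -(y 0) := by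
  simp [negIso0, LinearIsometryEquiv.piLpCongrRight_apply]

lemma negIso0_apply_one (y : E2) : negIso0 y 1 = y 1 := by
  simp [negIso0, LinearIsometryEquiv.piLpCongrRight_apply]

/-- negation of the second coordinate. -/
noncomputable def negIso1 : E2 ≃ₗᵢ[ℝ] E2 :=
  LinearIsometryEquiv.piLpCongrRight 2 ![LinearIsometryEquiv.refl ℝ ℝ, LinearIsometryEquiv.neg ℝ]

lemma negIso1_apply_zero (y : E2) : negIso1 y 0 = y 0 := by
  simp [negIso1, LinearIsometryEquiv.piLpCongrRight_apply]

lemma negIso1_apply_one (y : E2) : negIso1 y 1 = -(y 1) := by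
  simp [negIso1, LinearIsometryEquiv.piLpCongrRight_apply]

lemma Ubar_comp_isometry (e : E2 ≃ₗᵢ[ℝ] E2) (y : E2) : Ubar μ (e y) = Ubar μ y := by
  simp [Ubar, e.norm_map]

lemma Zker0_comp_isometry (e : E2 ≃ₗᵢ[ℝ] E2) (y : E2) : Zker μ 0 (e y) = Zker μ 0 y := by
  simp [Zker, e.norm_map]

lemma I01 (hμ : 0 < μ) : ∫ y : E2, Real.exp (Ubar μ y) * Zker μ 0 y * Zker μ 1 y = 0 := by
  apply integral_eq_zero_of_comp_neg negIso0
  intro y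
  rw [Ubar_comp_isometry, Zker0_comp_isometry]
  simp only [Zker, Matrix.cons_val_one, Matrix.head_cons, Matrix.cons_val_zero]
  rw [negIso0.norm_map, negIso0_apply_zero]
  ring

lemma I02 (hμ : 0 < μ) : ∫ y : E2, Real.exp (Ubar μ y) * Zker μ 0 y * Zker μ 2 y = 0 := by
  apply integral_eq_zero_of_comp_neg negIso1
  intro y
  rw [Ubar_comp_isometry, Zker0_comp_isometry]
  simp only [Zker, Matrix.cons_val_two, Matrix.tail_cons, Matrix.head_cons]
  rw [negIso1.norm_map, negIso1_apply_one]
  ring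

lemma I12 (hμ : 0 < μ) : ∫ y : E2, Real.exp (Ubar μ y) * Zker μ 1 y * Zker μ 2 y = 0 := by
  apply integral_eq_zero_of_comp_neg negIso0
  intro y
  rw [Ubar_comp_isometry]
  simp only [Zker, Matrix.cons_val_one, Matrix.head_cons, Matrix.cons_val_two, Matrix.tail_cons,
    Matrix.cons_val_zero]
  rw [negIso0.norm_map, negIso0_apply_zero, negIso0_apply_one]
  ring

lemma I22_eq_I11 (hμ : 0 < μ) :
    ∫ y : E2, Real.exp (Ubar μ y) * Zker μ 2 y * Zker μ 2 y
      = ∫ y : E2, Real.exp (Ubar μ y) * Zker μ 1 y * Zker μ 1 y := by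
  have := integral_comp_isometry swapIso
    (fun y : E2 => Real.exp (Ubar μ y) * Zker μ 2 y * Zker μ 2 y)
  rw [← this]
  congr 1
  funext y
  rw [Ubar_comp_isometry]
  simp only [Zker, Matrix.cons_val_one, Matrix.head_cons, Matrix.cons_val_two, Matrix.tail_cons,
    Matrix.cons_val_zero]
  rw [swapIso.norm_map, swapIso_apply_one]

lemma I11 (hμ : 0 < μ) :
    ∫ y : E2, Real.exp (Ubar μ y) * Zker μ 1 y * Zker μ 1 y = 8 * π / 3 := by
  have hsum : (fun y : E2 => Real.exp (Ubar μ y))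
      = fun y => Real.exp (Ubar μ y) * Zker μ 0 y * Zker μ 0 y
        + (Real.exp (Ubar μ y) * Zker μ 1 y * Zker μ 1 y
          + Real.exp (Ubar μ y) * Zker μ 2 y * Zker μ 2 y) := by
    funext y
    have h := Zker_sq_sum hμ y
    nlinarith [Real.exp_pos (Ubar μ y)]
  have hS := integral_S hμ
  have hadd1 : Integrable (fun y : E2 => Real.exp (Ubar μ y) * Zker μ 1 y * Zker μ 1 y
      + Real.exp (Ubar μ y) * Zker μ 2 y * Zker μ 2 y) volume :=
    (integrable_prod hμ 1 1).add (integrable_prod hμ 2 2)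
  rw [hsum, integral_add (integrable_prod hμ 0 0) hadd1,
    integral_add (integrable_prod hμ 1 1) (integrable_prod hμ 2 2),
    integral_D hμ, I22_eq_I11 hμ] at hS
  linarith

lemma I22 (hμ : 0 < μ) :
    ∫ y : E2, Real.exp (Ubar μ y) * Zker μ 2 y * Zker μ 2 y = 8 * π / 3 := by
  rw [I22_eq_I11 hμ]; exact I11 hμ

lemma integral_comm (i j : Fin 3) :
    ∫ y : E2, Real.exp (Ubar μ y) * Zker μ i y * Zker μ j y
      = ∫ y : E2, Real.exp (Ubar μ y) * Zker μ j y * Zker μ i y := by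
  congr 1
  funext y
  ring

end Aux

/-- For every `μ > 0` and all `i, j ∈ {0,1,2}`,
`∫_{ℝ²} e^{Ū_μ} Z_i Z_j dy = (8π/3) δ_{ij}`. -/
theorem integral_exp_Ubar_Z_mul_Z (μ : ℝ) (hμ : 0 < μ) (i j : Fin 3) :
    ∫ y : EuclideanSpace ℝ (Fin 2), Real.exp (Ubar μ y) * Zker μ i y * Zker μ j y
      = (8 * π / 3) * (if i = j then 1 else 0) := by
  fin_cases i <;> fin_cases j <;> norm_num
  · exact integral_D hμ
  · exact I01 hμ
  · exact I02 hμ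
  · rw [integral_comm]; exact I01 hμ
  · exact I11 hμ
  · exact I12 hμ
  · rw [integral_comm]; exact I02 hμ
  · rw [integral_comm]; exact I12 hμ
  · exact I22 hμ
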